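/- Let h be a random variable such that Y = ‖h‖² follows a Gamma distribution with shape Nm and rate m (pdf p(y) = m^{Nm}/Γ(Nm) · y^{Nm-1} e^{-my}), and let G be an independent exponential random variable with rate 1. Then for x > 0, P(Y·G ≤ x) = 1 - (2(mx)^{Nm/2}/Γ(Nm))·K_{Nm}(2√(mx)), where K_ν is the modified Bessel function of the second kind. -/

import Mathlib

open MeasureTheory ProbabilityTheory Set

/-- The modified Bessel function of the second kind, via its standard integral
representation `K_ν(z) = (1/2)(z/2)^ν ∫₀^∞ exp(-t - z²/(4t)) t^{-ν-1} dt` (for `z > 0`). -/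
noncomputable def besselK (ν z : ℝ) : ℝ :=
  (1 / 2) * (z / 2) ^ ν * ∫ t in Set.Ioi (0:ℝ), Real.exp (-t - z ^ 2 / (4 * t)) * t ^ (-ν - 1)

open Real in
/-- Change-of-variables computation: the "Laplace transform style" gamma integral equals the
Bessel expression. -/
lemma gamma_exp_integral_eq_besselK {ν r x : ℝ} (hν : 0 < ν) (hr : 0 < r) (hx : 0 < x) :
    ∫ y in Ioi (0:ℝ), gammaPDFReal ν r y * rexp (-(x / y)) =
      2 * (r * x) ^ (ν / 2) / Real.Gamma ν * besselK ν (2 * Real.sqrt (r * x)) := by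
  have hrx : 0 < r * x := mul_pos hr hx
  have h1 : ∫ y in Ioi (0:ℝ), gammaPDFReal ν r y * rexp (-(x / y))
      = r ^ ν / Real.Gamma ν * ∫ y in Ioi (0:ℝ), y ^ (ν - 1) * rexp (-(r * y) - x / y) := by
    rw [← integral_const_mul]
    refine setIntegral_congr_fun measurableSet_Ioi fun y hy => ?_
    rw [gammaPDFReal, if_pos (le_of_lt hy),
      show -(r * y) - x / y = -(r * y) + -(x / y) by ring, Real.exp_add]
    ring
  have h2 : ∫ y in Ioi (0:ℝ), y ^ (ν - 1) * rexp (-(r * y) - x / y)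
      = x ^ ν * ∫ t in Ioi (0:ℝ), rexp (-t - r * x / t) * t ^ (-ν - 1) := by
    have himg : (fun t => x / t) '' Ioi 0 = Ioi (0:ℝ) := by
      ext z
      simp only [mem_image, mem_Ioi]
      constructor
      · rintro ⟨t, ht, rfl⟩; positivity
      · intro hz; exact ⟨x / z, by positivity, by field_simp⟩
    have hderiv : ∀ t ∈ Ioi (0:ℝ),
        HasDerivWithinAt (fun t => x / t) (-x / t ^ 2) (Ioi 0) t := by
      intro t ht
      have : HasDerivAt (fun t => x / t) ((0 * t - x * 1) / t ^ 2) t :=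
        (hasDerivAt_const t x).div (hasDerivAt_id t) (ne_of_gt ht)
      simpa using this.hasDerivWithinAt
    have hinj : InjOn (fun t => x / t) (Ioi 0) := by
      intro a ha b hb h
      simp only at h
      rw [div_eq_div_iff (ne_of_gt ha) (ne_of_gt hb)] at h
      exact (mul_left_cancel₀ (ne_of_gt hx) h).symm
    have hcov := integral_image_eq_integral_abs_deriv_smul measurableSet_Ioi hderiv hinj
      (fun y => y ^ (ν - 1) * rexp (-(r * y) - x / y))
    rw [himg] at hcov
    rw [hcov, ← integral_const_mul]
    refine setIntegral_congr_fun measurableSet_Ioi fun t ht => ?_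
    have ht0 : (0:ℝ) < t := ht
    have hxt : x / (x / t) = t := by field_simp
    have e1 : ((x / t) : ℝ) ^ (ν - 1) = x ^ (ν - 1) * t ^ (-(ν - 1)) := by
      rw [Real.div_rpow hx.le ht0.le, Real.rpow_neg ht0.le, div_eq_mul_inv]
    have eX : x * x ^ (ν - 1) = x ^ ν := by
      nth_rewrite 1 [← Real.rpow_one x]
      rw [← Real.rpow_add hx]
      ring_nf
    have eT : t ^ (-(ν - 1)) / t ^ (2:ℕ) = t ^ (-ν - 1) := by
      rw [← Real.rpow_natCast t 2, ← Real.rpow_sub ht0]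
      norm_num
      ring_nf
    rw [smul_eq_mul, hxt, e1, neg_div, abs_neg,
      abs_of_nonneg (by positivity : (0:ℝ) ≤ x / t ^ 2),
      show -(r * (x / t)) - t = -t - r * x / t by ring, ← eX, ← eT]
    ring
  have h3 : besselK ν (2 * Real.sqrt (r * x))
      = 1 / 2 * (r * x) ^ (ν / 2) * ∫ t in Ioi (0:ℝ), rexp (-t - r * x / t) * t ^ (-ν - 1) := by
    unfold besselK
    have hz : (2 * Real.sqrt (r * x)) / 2 = Real.sqrt (r * x) := by ring
    have hsq : Real.sqrt (r * x) ^ ν = (r * x) ^ (ν / 2) := by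
      rw [Real.sqrt_eq_rpow, ← Real.rpow_mul hrx.le]
      ring_nf
    have hint : (fun t : ℝ => rexp (-t - (2 * Real.sqrt (r * x)) ^ 2 / (4 * t)) * t ^ (-ν - 1))
        = fun t : ℝ => rexp (-t - r * x / t) * t ^ (-ν - 1) := by
      funext t
      have h4 : (2 * Real.sqrt (r * x)) ^ 2 / (4 * t) = r * x / t := by
        rw [mul_pow, Real.sq_sqrt hrx.le, show (2:ℝ) ^ 2 = 4 by norm_num]
        exact mul_div_mul_left _ _ (by norm_num)
      rw [h4]
    rw [hz, hsq, hint]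
  rw [h1, h2, h3]
  set J := ∫ t in Ioi (0:ℝ), rexp (-t - r * x / t) * t ^ (-ν - 1) with hJ
  have hmul : r ^ ν * x ^ ν = (r * x) ^ ν := (Real.mul_rpow hr.le hx.le).symm
  have hhalf : (r * x) ^ (ν / 2) * (r * x) ^ (ν / 2) = (r * x) ^ ν := by
    rw [← Real.rpow_add hrx]
    ring_nf
  rw [show r ^ ν / Real.Gamma ν * (x ^ ν * J) = r ^ ν * x ^ ν * J / Real.Gamma ν by ring, hmul,
    ← hhalf]
  ring

lemma lintegral_gammaPDF_compl_Ioi (a r : ℝ) :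
    ∫⁻ y in (Ioi (0:ℝ))ᶜ, gammaPDF a r y = 0 := by
  rw [compl_Ioi, ← setLIntegral_congr Iio_ae_eq_Iic,
    setLIntegral_congr_fun measurableSet_Iio
      (fun y (hy : y ∈ Iio 0) => gammaPDF_of_neg hy), lintegral_zero]

theorem stmt_13 (N m : ℕ) (hN : 0 < N) (hm : 0 < m)
    {Ω : Type*} [MeasureSpace Ω] (μ : Measure Ω) [IsProbabilityMeasure μ]
    (Y G : Ω → ℝ) (hYG : IndepFun Y G μ)
    (hY : Measure.map Y μ = gammaMeasure ((N * m : ℕ) : ℝ) (m : ℝ))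
    (hG : Measure.map G μ = expMeasure 1)
    (x : ℝ) (hx : 0 < x) :
    μ {ω | Y ω * G ω ≤ x} =
      ENNReal.ofReal (1 - 2 * ((m : ℝ) * x) ^ (((N * m : ℕ) : ℝ) / 2) /
        Real.Gamma ((N * m : ℕ) : ℝ) *
          besselK ((N * m : ℕ) : ℝ) (2 * Real.sqrt ((m : ℝ) * x))) := by
  set ν : ℝ := ((N * m : ℕ) : ℝ) with hνdef
  have hν : 0 < ν := by
    rw [hνdef]
    exact_mod_cast Nat.mul_pos hN hm
  have hr : (0:ℝ) < (m : ℝ) := by exact_mod_cast hm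
  haveI hPG : IsProbabilityMeasure (gammaMeasure ν (m : ℝ)) := isProbabilityMeasure_gammaMeasure hν hr
  haveI hPE : IsProbabilityMeasure (expMeasure 1) := isProbabilityMeasure_gammaMeasure one_pos one_pos
  have hYm : AEMeasurable Y μ := by
    by_contra h
    rw [Measure.map_of_not_aemeasurable h] at hY
    have h1 := hPG.measure_univ
    rw [← hY] at h1
    simp at h1
  have hGm : AEMeasurable G μ := by
    by_contra h
    rw [Measure.map_of_not_aemeasurable h] at hG
    have h1 := hPE.measure_univ
    rw [← hG] at h1
    simp at h1
  have hmap : Measure.map (fun ω => (Y ω, G ω)) μ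
      = (gammaMeasure ν (m : ℝ)).prod (expMeasure 1) := by
    rw [← hY, ← hG]
    exact (indepFun_iff_map_prod_eq_prod_map_map hYm hGm).mp hYG
  have hset : MeasurableSet {p : ℝ × ℝ | p.1 * p.2 ≤ x} :=
    measurableSet_le (measurable_fst.mul measurable_snd) measurable_const
  have step1 : μ {ω | Y ω * G ω ≤ x}
      = ((gammaMeasure ν (m : ℝ)).prod (expMeasure 1)) {p : ℝ × ℝ | p.1 * p.2 ≤ x} := by
    rw [← hmap, Measure.map_apply_of_aemeasurable (hYm.prodMk hGm) hset]
    rfl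
  have hFmeas : Measurable fun y : ℝ =>
      expMeasure 1 (Prod.mk y ⁻¹' {p : ℝ × ℝ | p.1 * p.2 ≤ x}) :=
    measurable_measure_prodMk_left hset
  rw [step1, Measure.prod_apply hset, gammaMeasure,
    lintegral_withDensity_eq_lintegral_mul _ (show Measurable (gammaPDF ν (m : ℝ)) from (measurable_gammaPDFReal ν (m : ℝ)).ennreal_ofReal)
      hFmeas,
    ← lintegral_add_compl _ (measurableSet_Ioi : MeasurableSet (Ioi (0:ℝ)))]
  have hcompl : ∫⁻ y in (Ioi (0:ℝ))ᶜ,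
      (gammaPDF ν (m : ℝ) * fun y => expMeasure 1 (Prod.mk y ⁻¹' {p : ℝ × ℝ | p.1 * p.2 ≤ x})) y
      = 0 := by
    refine le_antisymm ?_ zero_le
    calc ∫⁻ y in (Ioi (0:ℝ))ᶜ, (gammaPDF ν (m : ℝ) * fun y =>
          expMeasure 1 (Prod.mk y ⁻¹' {p : ℝ × ℝ | p.1 * p.2 ≤ x})) y
        ≤ ∫⁻ y in (Ioi (0:ℝ))ᶜ, gammaPDF ν (m : ℝ) y * 1 := by
          refine lintegral_mono fun y => ?_
          exact mul_le_mul_right (by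
            rw [← hPE.measure_univ]; exact measure_mono (subset_univ _)) _
      _ = 0 := by simpa using lintegral_gammaPDF_compl_Ioi ν (m : ℝ)
  rw [hcompl, add_zero]
  have hF : ∀ y ∈ Ioi (0:ℝ),
      (gammaPDF ν (m : ℝ) * fun y => expMeasure 1 (Prod.mk y ⁻¹' {p : ℝ × ℝ | p.1 * p.2 ≤ x})) y
      = ENNReal.ofReal (gammaPDFReal ν (m : ℝ) y * (1 - Real.exp (-(x / y)))) := by
    intro y hy
    have hy0 : (0:ℝ) < y := hy
    have hpre : Prod.mk y ⁻¹' {p : ℝ × ℝ | p.1 * p.2 ≤ x} = Iic (x / y) := by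
      ext g
      simp only [mem_preimage, mem_setOf_eq, mem_Iic]
      rw [mul_comm, ← le_div_iff₀ hy0]
    have hexp : expMeasure 1 (Iic (x / y)) = ENNReal.ofReal (1 - Real.exp (-(x / y))) := by
      rw [expMeasure, gammaMeasure, withDensity_apply _ measurableSet_Iic,
        show gammaPDF 1 1 = exponentialPDF 1 from rfl,
        lintegral_exponentialPDF_eq_antiDeriv one_pos, if_pos (by positivity), one_mul]
    simp only [Pi.mul_apply, hpre, hexp, gammaPDF]
    rw [← ENNReal.ofReal_mul (gammaPDFReal_nonneg hν hr y)]
  rw [setLIntegral_congr_fun measurableSet_Ioi hF]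
  -- integrability facts
  have hIntPdf : IntegrableOn (gammaPDFReal ν (m : ℝ)) (Ioi 0) := by
    refine ⟨(measurable_gammaPDFReal ν (m : ℝ)).aestronglyMeasurable.restrict, ?_⟩
    rw [hasFiniteIntegral_iff_ofReal (ae_of_all _ fun y => gammaPDFReal_nonneg hν hr y)]
    calc ∫⁻ a in Ioi (0:ℝ), ENNReal.ofReal (gammaPDFReal ν (m : ℝ) a)
        = ∫⁻ a in Ioi (0:ℝ), gammaPDF ν (m : ℝ) a := rfl
      _ ≤ ∫⁻ a, gammaPDF ν (m : ℝ) a := setLIntegral_le_lintegral _ _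
      _ = 1 := lintegral_gammaPDF_eq_one hν hr
      _ < ⊤ := ENNReal.one_lt_top
  have hmeasE : Measurable fun y : ℝ => Real.exp (-(x / y)) :=
    ((measurable_const.div measurable_id).neg).exp
  have hbound2 : ∀ᵐ y ∂(volume.restrict (Ioi (0:ℝ))),
      ‖gammaPDFReal ν (m : ℝ) y * Real.exp (-(x / y))‖ ≤ ‖gammaPDFReal ν (m : ℝ) y‖ := by
    rw [ae_restrict_iff' measurableSet_Ioi]
    refine ae_of_all _ fun y hy => ?_
    have h0 : 0 ≤ gammaPDFReal ν (m : ℝ) y := gammaPDFReal_nonneg hν hr y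
    have he1 : Real.exp (-(x / y)) ≤ 1 := Real.exp_le_one_iff.mpr (by
      have : (0:ℝ) < x / y := div_pos hx hy
      linarith)
    rw [Real.norm_eq_abs, Real.norm_eq_abs, abs_of_nonneg h0,
      abs_of_nonneg (mul_nonneg h0 (Real.exp_pos _).le)]
    calc gammaPDFReal ν (m : ℝ) y * Real.exp (-(x / y))
        ≤ gammaPDFReal ν (m : ℝ) y * 1 := by
          exact mul_le_mul_of_nonneg_left he1 h0
      _ = gammaPDFReal ν (m : ℝ) y := mul_one _
  have hInt2 : IntegrableOn (fun y => gammaPDFReal ν (m : ℝ) y * Real.exp (-(x / y))) (Ioi 0) :=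
    Integrable.mono hIntPdf
      ((measurable_gammaPDFReal ν (m : ℝ)).mul hmeasE).aestronglyMeasurable.restrict hbound2
  have hInt1 : IntegrableOn (fun y => gammaPDFReal ν (m : ℝ) y * (1 - Real.exp (-(x / y))))
      (Ioi 0) := by
    have : (fun y => gammaPDFReal ν (m : ℝ) y * (1 - Real.exp (-(x / y))))
        = fun y => gammaPDFReal ν (m : ℝ) y - gammaPDFReal ν (m : ℝ) y * Real.exp (-(x / y)) := by
      funext y; ring
    rw [this]
    exact hIntPdf.sub hInt2
  have hnn : 0 ≤ᵐ[volume.restrict (Ioi (0:ℝ))]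
      fun y => gammaPDFReal ν (m : ℝ) y * (1 - Real.exp (-(x / y))) := by
    filter_upwards [ae_restrict_mem measurableSet_Ioi] with y hy
    have he1 : Real.exp (-(x / y)) ≤ 1 := Real.exp_le_one_iff.mpr (by
      have : (0:ℝ) < x / y := div_pos hx hy
      linarith)
    exact mul_nonneg (gammaPDFReal_nonneg hν hr y) (by linarith)
  rw [← ofReal_integral_eq_lintegral_ofReal hInt1 hnn]
  have hpdf1 : ∫ y in Ioi (0:ℝ), gammaPDFReal ν (m : ℝ) y = 1 := by
    have hl : ∫⁻ y in Ioi (0:ℝ), gammaPDF ν (m : ℝ) y = 1 := by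
      have h0 := lintegral_gammaPDF_eq_one hν hr
      rw [← lintegral_add_compl (gammaPDF ν (m : ℝ)) (measurableSet_Ioi : MeasurableSet (Ioi (0:ℝ))),
        lintegral_gammaPDF_compl_Ioi, add_zero] at h0
      exact h0
    rw [integral_eq_lintegral_of_nonneg_ae
      (ae_of_all _ fun y => gammaPDFReal_nonneg hν hr y)
      (measurable_gammaPDFReal ν (m : ℝ)).aestronglyMeasurable.restrict]
    rw [show (fun y => ENNReal.ofReal (gammaPDFReal ν (m : ℝ) y)) = gammaPDF ν (m : ℝ) from rfl, hl]
    simp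
  have hsplit : ∫ y in Ioi (0:ℝ), gammaPDFReal ν (m : ℝ) y * (1 - Real.exp (-(x / y)))
      = 1 - ∫ y in Ioi (0:ℝ), gammaPDFReal ν (m : ℝ) y * Real.exp (-(x / y)) := by
    have : (fun y => gammaPDFReal ν (m : ℝ) y * (1 - Real.exp (-(x / y))))
        = fun y => gammaPDFReal ν (m : ℝ) y - gammaPDFReal ν (m : ℝ) y * Real.exp (-(x / y)) := by
      funext y; ring
    rw [this, integral_sub hIntPdf hInt2, hpdf1]
  rw [hsplit, gamma_exp_integral_eq_besselK hν hr hx]
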